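/- Let $R$ be a commutative noetherian ring, $\mathcal{X}$ a torsion-free class of finitely generated $R$-modules, and $\mathfrak{p}$ a prime ideal such that $\mathfrak{p} \in \mathrm{Ass}(X)$ for some $X \in \mathcal{X}$. Then every finitely generated $R$-module $M$ with $\mathrm{Ass}(M) = \{\mathfrak{p}\}$ belongs to $\mathcal{X}$. -/

import Mathlib

universe u

variable {R : Type u} [CommRing R]

/-- A predicate on (finitely generated) `R`-modules, i.e. a subcategory of `mod R` closed
under isomorphisms. -/
abbrev ModClass (R : Type u) [CommRing R] : Type (u + 1) :=
  ∀ (M : Type u) [AddCommGroup M] [Module R M], Prop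

/-- Closed under isomorphisms (among finitely generated modules). -/
def IsoClosed (P : ModClass R) : Prop :=
  ∀ (M N : Type u) [AddCommGroup M] [Module R M] [AddCommGroup N] [Module R N],
    Module.Finite R M → (M ≃ₗ[R] N) → P M → P N

/-- Closed under submodules (among finitely generated modules). -/
def SubClosed (P : ModClass R) : Prop :=
  ∀ (M : Type u) [AddCommGroup M] [Module R M],
    Module.Finite R M → P M → ∀ N : Submodule R M, P N

/-- Closed under extensions (among finitely generated modules). -/
def ExtClosed (P : ModClass R) : Prop :=
  ∀ (A B C : Type u) [AddCommGroup A] [Module R A] [AddCommGroup B] [Module R B]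
    [AddCommGroup C] [Module R C],
    Module.Finite R A → Module.Finite R B → Module.Finite R C →
    ∀ (f : A →ₗ[R] B) (g : B →ₗ[R] C), Function.Injective f → Function.Surjective g →
      LinearMap.range f = LinearMap.ker g → P A → P C → P B

theorem assoc_iff_ann {R : Type u} [CommRing R] [IsNoetherianRing R] {M : Type u}
    [AddCommGroup M] [Module R M] {I : Ideal R} :
    I ∈ associatedPrimes R M ↔ I.IsPrime ∧ ∃ x : M, I = (R ∙ x).annihilator := by
  have h : ∀ x : M, Submodule.colon (⊥ : Submodule R M) {x} = (R ∙ x).annihilator := fun x => by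
    ext r
    rw [Submodule.mem_colon_singleton, Submodule.mem_bot, Submodule.mem_annihilator_span_singleton]
  rw [AssociatedPrimes.mem_iff, isAssociatedPrime_iff]
  simp only [h]

section Aux

variable {R : Type u} [CommRing R] [IsNoetherianRing R]

/-- A finite product of elements outside a prime ideal is outside the prime ideal. -/
theorem prod_notMem_prime {𝔭 : Ideal R} (h𝔭 : 𝔭.IsPrime) {ι : Type*} (s : Finset ι)
    (f : ι → R) (hf : ∀ i ∈ s, f i ∉ 𝔭) : (∏ i ∈ s, f i) ∉ 𝔭 := by
  classical
  induction s using Finset.induction_on with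
  | empty =>
    simpa using fun h => h𝔭.ne_top ((Ideal.eq_top_iff_one 𝔭).mpr h)
  | @insert a s ha ih =>
    rw [Finset.prod_insert ha]
    intro h
    rcases h𝔭.mem_or_mem h with h1 | h2
    · exact hf a (Finset.mem_insert_self a s) h1
    · exact ih (fun i hi => hf i (Finset.mem_insert_of_mem hi)) h2

/-- `P` holds for any subsingleton module (it is isomorphic to the zero submodule of `X`). -/
theorem P_subsingleton (P : ModClass R) (hiso : IsoClosed P) (hsub : SubClosed P)
    (X : Type u) [AddCommGroup X] [Module R X] [Module.Finite R X] (hX : P X)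
    (Z : Type u) [AddCommGroup Z] [Module R Z] (hZ : Subsingleton Z) : P Z := by
  have hbot : P ↥(⊥ : Submodule R X) := hsub X inferInstance hX ⊥
  haveI : Module.Finite R ↥(⊥ : Submodule R X) := Module.Finite.iff_fg.mpr Submodule.fg_bot
  exact hiso _ _ this (LinearEquiv.ofSubsingleton _ _) hbot

/-- Key induction: any finitely generated module killed by `𝔭` and with no
`𝔭`-complement-torsion belongs to `P`, given that `R/𝔭` appears as a cyclic submodule of
some `X ∈ P`. Induction on the number of generators. -/
theorem P_tf (P : ModClass R) (hiso : IsoClosed P) (hsub : SubClosed P) (hext : ExtClosed P)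
    (𝔭 : Ideal R) (h𝔭 : 𝔭.IsPrime)
    (X : Type u) [AddCommGroup X] [Module R X] [Module.Finite R X]
    (hX : P X) (x : X) (hx : 𝔭 = (R ∙ x).annihilator) :
    ∀ (n : ℕ) (Q : Type u) [AddCommGroup Q] [Module R Q] (v : Fin n → Q),
      Submodule.span R (Set.range v) = ⊤ →
      (∀ p ∈ 𝔭, ∀ q : Q, p • q = 0) →
      (∀ (s : R) (q : Q), s ∉ 𝔭 → s • q = 0 → q = 0) → P Q := by
  intro n
  induction n with
  | zero =>
    intro Q ig im v hspan hkill htf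
    have h0 : (⊤ : Submodule R Q) = ⊥ := by
      rw [← hspan, Set.range_eq_empty, Submodule.span_empty]
    have : Subsingleton Q := by
      refine ⟨fun a b => ?_⟩
      have ha : a ∈ (⊥ : Submodule R Q) := h0 ▸ Submodule.mem_top
      have hb : b ∈ (⊥ : Submodule R Q) := h0 ▸ Submodule.mem_top
      rw [Submodule.mem_bot] at ha hb
      rw [ha, hb]
    exact P_subsingleton P hiso hsub X hX Q this
  | succ n ih =>
    intro Q ig im v hspan hkill htf
    haveI hQfin : Module.Finite R Q :=
      ⟨by rw [← hspan]; exact Submodule.fg_span (Set.finite_range v)⟩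
    by_cases h0 : v 0 = 0
    · refine ih Q (v ∘ Fin.succ) ?_ hkill htf
      refine le_antisymm le_top ?_
      rw [← hspan]
      refine Submodule.span_le.mpr ?_
      rintro y ⟨i, rfl⟩
      induction i using Fin.cases with
      | zero => rw [h0]; exact Submodule.zero_mem _
      | succ j => exact Submodule.subset_span ⟨j, rfl⟩
    · -- the cyclic submodule generated by `v 0` is isomorphic to `R ∙ x ⊆ X`
      set tQ := LinearMap.toSpanSingleton R Q (v 0) with htQ
      have hmem𝔭x : ∀ r : R, r ∈ 𝔭 ↔ r • x = 0 := fun r => by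
        rw [hx, Submodule.mem_annihilator_span_singleton]
      have hannq : LinearMap.ker tQ = LinearMap.ker (LinearMap.toSpanSingleton R X x) := by
        ext r
        simp only [htQ, LinearMap.mem_ker, LinearMap.toSpanSingleton_apply]
        rw [← hmem𝔭x r]
        constructor
        · intro hr
          by_contra hr𝔭
          exact h0 (htf r (v 0) hr𝔭 hr)
        · intro hp
          exact hkill r hp (v 0)
      set Y := LinearMap.range tQ with hY
      have e : ↥(LinearMap.range (LinearMap.toSpanSingleton R X x)) ≃ₗ[R] ↥Y :=
        (LinearMap.quotKerEquivRange (LinearMap.toSpanSingleton R X x)).symm ≪≫ₗ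
          (Submodule.quotEquivOfEq _ _ hannq.symm) ≪≫ₗ (LinearMap.quotKerEquivRange tQ)
      haveI finX' : Module.Finite R ↥(LinearMap.range (LinearMap.toSpanSingleton R X x)) :=
        Module.Finite.iff_fg.mpr (IsNoetherian.noetherian _)
      have hPY : P ↥Y := hiso _ _ finX' e (hsub X inferInstance hX _)
      haveI finY : Module.Finite R ↥Y := Module.Finite.iff_fg.mpr (IsNoetherian.noetherian _)
      -- the saturation of Y
      set K : Submodule R Q :=
        { carrier := {q | ∃ t, t ∉ 𝔭 ∧ t • q ∈ Y}
          add_mem' := by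
            rintro a b ⟨s, hs, hsa⟩ ⟨t, ht, htb⟩
            refine ⟨s * t, fun h => (h𝔭.mem_or_mem h).elim hs ht, ?_⟩
            rw [smul_add]
            refine Submodule.add_mem _ ?_ ?_
            · rw [mul_comm, mul_smul]; exact Submodule.smul_mem _ t hsa
            · rw [mul_smul]; exact Submodule.smul_mem _ s htb
          zero_mem' := ⟨1, fun h => h𝔭.ne_top ((Ideal.eq_top_iff_one 𝔭).mpr h), by
            rw [smul_zero]; exact Submodule.zero_mem _⟩
          smul_mem' := by
            rintro r a ⟨s, hs, hsa⟩
            exact ⟨s, hs, by rw [smul_comm]; exact Submodule.smul_mem _ r hsa⟩ } with hK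
      have hmemK : ∀ q : Q, q ∈ K ↔ ∃ t, t ∉ 𝔭 ∧ t • q ∈ Y := fun q => Iff.rfl
      obtain ⟨m, w, hw⟩ := Submodule.fg_iff_exists_fin_generating_family.mp
        (IsNoetherian.noetherian K)
      have hwi : ∀ i, ∃ t, t ∉ 𝔭 ∧ t • w i ∈ Y := fun i =>
        (hmemK (w i)).mp (hw ▸ Submodule.subset_span ⟨i, rfl⟩)
      choose tf htf1 htf2 using hwi
      set t : R := ∏ i : Fin m, tf i with ht
      have htnot : t ∉ 𝔭 := prod_notMem_prime h𝔭 _ _ (fun i _ => htf1 i)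
      have hKt : ∀ q ∈ K, t • q ∈ Y := by
        intro q hq
        have hle : K ≤ Y.comap (LinearMap.lsmul R Q t) := by
          rw [← hw]
          refine Submodule.span_le.mpr ?_
          rintro y ⟨i, rfl⟩
          have h1 : t = tf i * ∏ j ∈ Finset.univ.erase i, tf j :=
            (Finset.mul_prod_erase Finset.univ tf (Finset.mem_univ i)).symm
          have h2 : t • w i = (∏ j ∈ Finset.univ.erase i, tf j) • (tf i • w i) := by
            rw [smul_smul, mul_comm, ← h1]
          show t • w i ∈ Y
          rw [h2]
          exact Submodule.smul_mem _ _ (htf2 i)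
        exact hle hq
      set g : ↥K →ₗ[R] ↥Y :=
        LinearMap.codRestrict Y ((LinearMap.lsmul R Q t).comp K.subtype)
          (fun k => hKt (↑k) k.2) with hg
      have hginj : Function.Injective g := by
        intro a b hab
        have h1 : t • (a : Q) = t • (b : Q) := congrArg Subtype.val hab
        have h2 : t • ((a : Q) - (b : Q)) = 0 := by rw [smul_sub, h1, sub_self]
        exact Subtype.ext (sub_eq_zero.mp (htf t _ htnot h2))
      haveI finK : Module.Finite R ↥K := Module.Finite.iff_fg.mpr (IsNoetherian.noetherian _)
      haveI finrg : Module.Finite R ↥(LinearMap.range g) :=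
        Module.Finite.iff_fg.mpr (IsNoetherian.noetherian _)
      have hPK : P ↥K :=
        hiso _ _ finrg (LinearEquiv.ofInjective g hginj).symm (hsub ↥Y finY hPY _)
      -- quotient
      have hv0K : v 0 ∈ K := ⟨1, fun h => h𝔭.ne_top ((Ideal.eq_top_iff_one 𝔭).mpr h), by
        rw [one_smul]; exact ⟨1, by rw [LinearMap.toSpanSingleton_apply, one_smul]⟩⟩
      haveI finQb : Module.Finite R (Q ⧸ K) :=
        Module.Finite.of_surjective K.mkQ (Submodule.mkQ_surjective K)
      have hspanb : Submodule.span R (Set.range (K.mkQ ∘ v ∘ Fin.succ)) = ⊤ := by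
        refine le_antisymm le_top ?_
        have h1 : Submodule.map K.mkQ (Submodule.span R (Set.range v)) = ⊤ := by
          rw [hspan, Submodule.map_top, Submodule.range_mkQ]
        rw [Submodule.map_span] at h1
        rw [← h1]
        refine Submodule.span_le.mpr ?_
        rintro y ⟨y', ⟨i, rfl⟩, rfl⟩
        induction i using Fin.cases with
        | zero =>
          have : K.mkQ (v 0) = 0 := (Submodule.Quotient.mk_eq_zero K).mpr hv0K
          rw [Submodule.mkQ_apply] at this ⊢
          rw [this]
          exact Submodule.zero_mem _
        | succ j => exact Submodule.subset_span ⟨j, rfl⟩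
      have hkillb : ∀ p ∈ 𝔭, ∀ c : Q ⧸ K, p • c = 0 := by
        intro p hp c
        obtain ⟨q, rfl⟩ := Submodule.Quotient.mk_surjective K c
        rw [← Submodule.Quotient.mk_smul, hkill p hp q, Submodule.Quotient.mk_zero]
      have htfb : ∀ (s : R) (c : Q ⧸ K), s ∉ 𝔭 → s • c = 0 → c = 0 := by
        intro s c hs hsc
        obtain ⟨q, rfl⟩ := Submodule.Quotient.mk_surjective K c
        rw [← Submodule.Quotient.mk_smul, Submodule.Quotient.mk_eq_zero] at hsc
        obtain ⟨t', ht', h⟩ := hsc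
        rw [Submodule.Quotient.mk_eq_zero]
        refine ⟨t' * s, fun hmem => (h𝔭.mem_or_mem hmem).elim ht' hs, ?_⟩
        rw [mul_smul]; exact h
      have hPQb : P (Q ⧸ K) := ih (Q ⧸ K) (K.mkQ ∘ v ∘ Fin.succ) hspanb hkillb htfb
      exact hext ↥K Q (Q ⧸ K) finK hQfin finQb K.subtype K.mkQ
        (Submodule.injective_subtype K) (Submodule.mkQ_surjective K)
        (by rw [Submodule.range_subtype, Submodule.ker_mkQ]) hPK hPQb

/-- Elementary key fact: a minimal prime over the annihilator of a finitely generated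
module over a noetherian ring is an associated prime. -/
theorem minimal_mem_associatedPrimes
    (M : Type u) [AddCommGroup M] [Module R M] [Module.Finite R M]
    (𝔮 : Ideal R) (h𝔮 : 𝔮 ∈ ((⊤ : Submodule R M).annihilator).minimalPrimes) :
    𝔮 ∈ associatedPrimes R M := by
  classical
  have h𝔮p : 𝔮.IsPrime := h𝔮.1.1
  have h𝔮le : (⊤ : Submodule R M).annihilator ≤ 𝔮 := h𝔮.1.2
  -- the 𝔮-complement torsion submodule
  set N : Submodule R M :=
    { carrier := {m | ∃ s, s ∉ 𝔮 ∧ s • m = 0}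
      add_mem' := by
        rintro a b ⟨s, hs, hsa⟩ ⟨t, ht, htb⟩
        refine ⟨s * t, fun h => (h𝔮p.mem_or_mem h).elim hs ht, ?_⟩
        rw [smul_add, mul_comm, mul_smul, hsa, smul_zero, mul_comm, mul_smul, htb, smul_zero,
          add_zero]
      zero_mem' := ⟨1, fun h => h𝔮p.ne_top ((Ideal.eq_top_iff_one 𝔮).mpr h), smul_zero 1⟩
      smul_mem' := by
        rintro r a ⟨s, hs, hsa⟩
        exact ⟨s, hs, by rw [smul_comm, hsa, smul_zero]⟩ } with hN
  have hmemN : ∀ m : M, m ∈ N ↔ ∃ s, s ∉ 𝔮 ∧ s • m = 0 := fun m => Iff.rfl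
  have hNtop : N ≠ ⊤ := by
    intro hN'
    obtain ⟨S, hS⟩ := Module.Finite.fg_top (R := R) (M := M)
    have hmem : ∀ m : M, ∃ s, s ∉ 𝔮 ∧ s • m = 0 := fun m =>
      (hmemN m).mp (hN' ▸ Submodule.mem_top)
    choose f hf1 hf2 using hmem
    set s : R := ∏ m ∈ S, f m with hs
    have hsnot : s ∉ 𝔮 := prod_notMem_prime h𝔮p _ _ (fun m _ => hf1 m)
    have hskill : s ∈ (⊤ : Submodule R M).annihilator := by
      rw [Submodule.mem_annihilator]
      intro n _
      have hle : (⊤ : Submodule R M) ≤ LinearMap.ker (LinearMap.lsmul R M s) := by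
        rw [← hS]
        refine Submodule.span_le.mpr ?_
        intro m hm
        have h1 : s = f m * ∏ b ∈ S.erase m, f b := (Finset.mul_prod_erase S f hm).symm
        show s • m = 0
        rw [h1, mul_comm, mul_smul, hf2 m, smul_zero]
      have := hle (Submodule.mem_top (x := n))
      exact this
    exact hsnot (h𝔮le hskill)
  haveI : Nontrivial (M ⧸ N) :=
    Submodule.Quotient.nontrivial_iff.mpr hNtop
  obtain ⟨𝔮'', h''⟩ := associatedPrimes.nonempty R (M ⧸ N)
  obtain ⟨h''p, xbar, hxbar⟩ := assoc_iff_ann.mp h''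
  obtain ⟨q, rfl⟩ := Submodule.Quotient.mk_surjective N xbar
  have hq0 : (Submodule.Quotient.mk q : M ⧸ N) ≠ 0 := by
    intro h
    apply h''p.ne_top
    rw [hxbar, h, Submodule.span_singleton_eq_bot.mpr rfl, Submodule.annihilator_bot]
  -- 𝔮'' ≤ 𝔮
  have ha : 𝔮'' ≤ 𝔮 := by
    intro r hr
    by_contra hr𝔮
    have h1 : r • (Submodule.Quotient.mk q : M ⧸ N) = 0 := by
      rw [← Submodule.mem_annihilator_span_singleton, ← hxbar]; exact hr
    rw [← Submodule.Quotient.mk_smul, Submodule.Quotient.mk_eq_zero] at h1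
    obtain ⟨s, hs, hsrq⟩ := h1
    apply hq0
    rw [Submodule.Quotient.mk_eq_zero]
    refine ⟨s * r, fun h => (h𝔮p.mem_or_mem h).elim hs hr𝔮, ?_⟩
    rw [mul_smul]; exact hsrq
  -- ann ≤ 𝔮''
  have hb : (⊤ : Submodule R M).annihilator ≤ 𝔮'' := by
    intro r hr
    have h1 : r • q = 0 := Submodule.mem_annihilator.mp hr q Submodule.mem_top
    rw [hxbar, Submodule.mem_annihilator_span_singleton, ← Submodule.Quotient.mk_smul, h1,
      Submodule.Quotient.mk_zero]
  have heq : 𝔮 = 𝔮'' := le_antisymm (h𝔮.2 ⟨h''p, hb⟩ ha) ha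
  -- produce an element of M with annihilator 𝔮
  obtain ⟨A, hA⟩ := IsNoetherian.noetherian 𝔮
  have hAq : ∀ a ∈ A, ∃ s, s ∉ 𝔮 ∧ s • (a • q) = 0 := by
    intro a haA
    have ha𝔮 : a ∈ 𝔮 := hA ▸ Submodule.subset_span haA
    have h1 : a • (Submodule.Quotient.mk q : M ⧸ N) = 0 := by
      rw [← Submodule.mem_annihilator_span_singleton, ← hxbar, ← heq]; exact ha𝔮
    rw [← Submodule.Quotient.mk_smul, Submodule.Quotient.mk_eq_zero] at h1
    exact h1
  choose! g hg1 hg2 using hAq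
  set s : R := ∏ a ∈ A, g a with hsdef
  have hsnot : s ∉ 𝔮 := prod_notMem_prime h𝔮p _ _ hg1
  refine assoc_iff_ann.mpr ⟨h𝔮p, s • q, ?_⟩
  refine le_antisymm ?_ ?_
  · -- 𝔮 ≤ ann (s • q)
    rw [← hA]
    refine Submodule.span_le.mpr ?_
    intro a haA
    have haA' : a ∈ A := Finset.mem_coe.mp haA
    rw [SetLike.mem_coe, Submodule.mem_annihilator_span_singleton]
    have h1 : a * s = (∏ b ∈ A.erase a, g b) * g a * a := by
      rw [hsdef, ← Finset.mul_prod_erase A g haA']; ring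
    have h2 : a • (s • q) = (∏ b ∈ A.erase a, g b) • (g a • (a • q)) := by
      rw [smul_smul, smul_smul, smul_smul, h1]
    rw [h2, hg2 a haA', smul_zero]
  · -- ann (s • q) ≤ 𝔮
    intro r hr
    rw [Submodule.mem_annihilator_span_singleton] at hr
    have h1 : (r * s) • q = 0 := by rw [mul_smul]; exact hr
    have h2 : (r * s) • (Submodule.Quotient.mk q : M ⧸ N) = 0 := by
      rw [← Submodule.Quotient.mk_smul, h1, Submodule.Quotient.mk_zero]
    have h3 : r * s ∈ 𝔮 := by
      rw [heq, hxbar, Submodule.mem_annihilator_span_singleton]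
      exact h2
    exact ((h𝔮p.mem_or_mem h3).resolve_right hsnot)

end Aux


section Main

variable {R : Type u} [CommRing R] [IsNoetherianRing R]

/-- If `Ass M = {𝔭}`, then `M` has no `𝔭`-complement torsion. -/
theorem tf_of_ass_singleton (𝔭 : Ideal R) (h𝔭 : 𝔭.IsPrime)
    (M : Type u) [AddCommGroup M] [Module R M]
    (hM : associatedPrimes R M = {𝔭}) :
    ∀ (s : R) (m : M), s ∉ 𝔭 → s • m = 0 → m = 0 := by
  intro s m hs hsm
  by_contra hm
  set T : Submodule R M :=
    { carrier := {m' | ∃ t, t ∉ 𝔭 ∧ t • m' = 0}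
      add_mem' := by
        rintro a b ⟨u, hu, hua⟩ ⟨t, ht, htb⟩
        refine ⟨u * t, fun h => (h𝔭.mem_or_mem h).elim hu ht, ?_⟩
        rw [smul_add, mul_comm, mul_smul, hua, smul_zero, mul_comm, mul_smul, htb, smul_zero,
          add_zero]
      zero_mem' := ⟨1, fun h => h𝔭.ne_top ((Ideal.eq_top_iff_one 𝔭).mpr h), smul_zero 1⟩
      smul_mem' := by
        rintro r a ⟨t, ht, hta⟩
        exact ⟨t, ht, by rw [smul_comm, hta, smul_zero]⟩ } with hT
  have hmT : m ∈ T := ⟨s, hs, hsm⟩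
  haveI : Nontrivial ↥T :=
    ⟨⟨⟨m, hmT⟩, 0, fun h => hm (congrArg Subtype.val h)⟩⟩
  obtain ⟨𝔮, h𝔮⟩ := associatedPrimes.nonempty R ↥T
  have h𝔮M : 𝔮 ∈ associatedPrimes R M :=
    h𝔮.map_of_injective T.subtype (Submodule.injective_subtype T)
  have h𝔮𝔭 : 𝔮 = 𝔭 := by rw [hM] at h𝔮M; exact h𝔮M
  obtain ⟨h𝔮p, y, hy⟩ := assoc_iff_ann.mp h𝔮
  obtain ⟨t, ht, hty⟩ := y.2
  have htmem : t ∈ 𝔮 := by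
    rw [hy, Submodule.mem_annihilator_span_singleton]
    exact Subtype.ext hty
  exact ht (h𝔮𝔭 ▸ htmem)

/-- If `Ass M = {𝔭}` then some power of `𝔭` kills `M`. -/
theorem pow_kills_of_ass_singleton (𝔭 : Ideal R) (h𝔭 : 𝔭.IsPrime)
    (M : Type u) [AddCommGroup M] [Module R M] [Module.Finite R M]
    (hM : associatedPrimes R M = {𝔭}) :
    ∃ n : ℕ, ∀ p ∈ (𝔭 ^ n : Ideal R), ∀ m : M, p • m = 0 := by
  have hrad : 𝔭 ≤ ((⊤ : Submodule R M).annihilator).radical := by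
    rw [Ideal.radical_eq_sInf]
    refine le_sInf ?_
    rintro J ⟨hJ1, hJ2⟩
    haveI := hJ2
    obtain ⟨q₀, hq₀, hq₀J⟩ := Ideal.exists_minimalPrimes_le hJ1
    have : q₀ ∈ associatedPrimes R M := minimal_mem_associatedPrimes M q₀ hq₀
    rw [hM] at this
    rw [← this]
    exact hq₀J
  obtain ⟨n, hn⟩ :=
    Ideal.exists_pow_le_of_le_radical_of_fg hrad (IsNoetherian.noetherian 𝔭)
  refine ⟨n, fun p hp m => ?_⟩
  exact Submodule.mem_annihilator.mp (hn hp) m Submodule.mem_top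

end Main

theorem statement15 {R : Type u} [CommRing R] [IsNoetherianRing R]
    (P : ModClass R) (hclass : IsoClosed P ∧ SubClosed P ∧ ExtClosed P)
    (𝔭 : Ideal R) (h𝔭 : 𝔭.IsPrime)
    (X : Type u) [AddCommGroup X] [Module R X] [Module.Finite R X]
    (hX : P X) (h𝔭X : 𝔭 ∈ associatedPrimes R X)
    (M : Type u) [AddCommGroup M] [Module R M] [Module.Finite R M]
    (hM : associatedPrimes R M = {𝔭}) :
    P M := by
  obtain ⟨hiso, hsub, hext⟩ := hclass
  obtain ⟨-, x, hx⟩ := assoc_iff_ann.mp h𝔭X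
  have htf : ∀ (s : R) (m : M), s ∉ 𝔭 → s • m = 0 → m = 0 :=
    tf_of_ass_singleton 𝔭 h𝔭 M hM
  obtain ⟨n, hkill⟩ := pow_kills_of_ass_singleton 𝔭 h𝔭 M hM
  -- the filtration by annihilators of powers of 𝔭
  set F : ℕ → Submodule R M := fun i =>
    { carrier := {m | ∀ p ∈ (𝔭 ^ i : Ideal R), p • m = 0}
      add_mem' := fun ha hb p hp => by rw [smul_add, ha p hp, hb p hp, add_zero]
      zero_mem' := fun p _ => smul_zero p
      smul_mem' := fun r a ha p hp => by rw [smul_comm, ha p hp, smul_zero] } with hF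
  have hmemF : ∀ (i : ℕ) (m : M), m ∈ F i ↔ ∀ p ∈ (𝔭 ^ i : Ideal R), p • m = 0 :=
    fun i m => Iff.rfl
  have hFmono : ∀ i : ℕ, F i ≤ F (i + 1) := by
    intro i m hm p hp
    exact hm p (Ideal.pow_le_pow_right (Nat.le_succ i) hp)
  have hPF : ∀ i : ℕ, P ↥(F i) := by
    intro i
    induction i with
    | zero =>
      have hsing : Subsingleton ↥(F 0) := by
        refine ⟨fun a b => Subtype.ext ?_⟩
        have ha : (1 : R) • (a : M) = 0 := a.2 1 (by rw [pow_zero, Ideal.one_eq_top]; exact Submodule.mem_top)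
        have hb : (1 : R) • (b : M) = 0 := b.2 1 (by rw [pow_zero, Ideal.one_eq_top]; exact Submodule.mem_top)
        rw [one_smul] at ha hb
        rw [ha, hb]
      exact P_subsingleton P hiso hsub X hX ↥(F 0) hsing
    | succ i ihP =>
      set K : Submodule R ↥(F (i + 1)) := Submodule.comap (F (i + 1)).subtype (F i) with hKdef
      haveI finFi : Module.Finite R ↥(F i) := Module.Finite.iff_fg.mpr (IsNoetherian.noetherian _)
      haveI finFsi : Module.Finite R ↥(F (i + 1)) :=
        Module.Finite.iff_fg.mpr (IsNoetherian.noetherian _)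
      haveI finK : Module.Finite R ↥K := Module.Finite.iff_fg.mpr (IsNoetherian.noetherian _)
      haveI finC : Module.Finite R (↥(F (i + 1)) ⧸ K) :=
        Module.Finite.of_surjective K.mkQ (Submodule.mkQ_surjective K)
      have hPA : P ↥K :=
        hiso _ _ finFi (Submodule.comapSubtypeEquivOfLe (hFmono i)).symm ihP
      -- the quotient is killed by 𝔭 and torsion-free
      have hkillC : ∀ p ∈ 𝔭, ∀ c : ↥(F (i + 1)) ⧸ K, p • c = 0 := by
        intro p hp c
        obtain ⟨z, rfl⟩ := Submodule.Quotient.mk_surjective K c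
        rw [← Submodule.Quotient.mk_smul, Submodule.Quotient.mk_eq_zero]
        show ((p • z : ↥(F (i + 1))) : M) ∈ F i
        intro r hr
        have : (r * p) • (z : M) = 0 :=
          z.2 (r * p) (by rw [pow_succ]; exact Ideal.mul_mem_mul hr hp)
        rw [Submodule.coe_smul, smul_smul]
        exact this
      have htfC : ∀ (s : R) (c : ↥(F (i + 1)) ⧸ K), s ∉ 𝔭 → s • c = 0 → c = 0 := by
        intro s c hs hsc
        obtain ⟨z, rfl⟩ := Submodule.Quotient.mk_surjective K c
        rw [← Submodule.Quotient.mk_smul, Submodule.Quotient.mk_eq_zero] at hsc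
        rw [Submodule.Quotient.mk_eq_zero]
        show (z : M) ∈ F i
        intro r hr
        have h1 : r • ((s • z : ↥(F (i + 1))) : M) = 0 := hsc r hr
        rw [Submodule.coe_smul, smul_smul, mul_comm, ← smul_smul] at h1
        exact htf s _ hs h1
      obtain ⟨mC, vC, hvC⟩ := Submodule.fg_iff_exists_fin_generating_family.mp
        (Module.finite_def.mp finC)
      have hPC : P (↥(F (i + 1)) ⧸ K) :=
        P_tf P hiso hsub hext 𝔭 h𝔭 X hX x hx mC (↥(F (i + 1)) ⧸ K) vC
          hvC hkillC htfC
      exact hext ↥K ↥(F (i + 1)) (↥(F (i + 1)) ⧸ K) finK finFsi finC K.subtype K.mkQ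
        (Submodule.injective_subtype K) (Submodule.mkQ_surjective K)
        (by rw [Submodule.range_subtype, Submodule.ker_mkQ]) hPA hPC
  have hFn : F n = ⊤ := by
    refine le_antisymm le_top ?_
    intro m _
    exact fun p hp => hkill p hp m
  have hPtop : P ↥(⊤ : Submodule R M) := hFn ▸ hPF n
  haveI fintop : Module.Finite R ↥(⊤ : Submodule R M) :=
    Module.Finite.iff_fg.mpr (IsNoetherian.noetherian _)
  exact hiso _ _ fintop (Submodule.topEquiv) hPtop
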